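/- Let X and Y be nonzero complex Banach spaces, let S₁, T₁ ∈ B(X) and S₂, T₂ ∈ B(Y), and let n ≥ 1. Then β_n(S₁⊗S₂, T₁⊗T₂) = 0 in the algebraic tensor product B(X) ⊗ B(Y) if and only if there exist positive integers l, m with l + m = n + 1 and a nonzero complex number λ such that β_l(S₁, λT₁) = 0 in B(X) and β_m(S₂, (1/λ)T₂) = 0 in B(Y). (That is, S₁⊗S₂ is a left n-inverse of T₁⊗T₂ if and only if S₁ is a left l-inverse of λT₁ and S₂ is a left m-inverse of (1/λ)T₂.) -/

import Mathlib

open scoped TensorProduct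

/-- `β_n(S,T) = Σ_{k=0}^n (−1)^{n−k} C(n,k) S^k T^k`. -/
noncomputable def beta {A : Type*} [Ring A] (n : ℕ) (S T : A) : A :=
  ∑ k ∈ Finset.range (n + 1), ((-1 : ℤ) ^ (n - k) * (n.choose k : ℤ)) • (S ^ k * T ^ k)

namespace BetaAux

open Polynomial

/-! ### Generalities -/

/-- binomial expansion of `(x-1)^n` in a (noncommutative) ring. -/
lemma sub_one_pow {R : Type*} [Ring R] (x : R) (n : ℕ) :
    (x - 1) ^ n =
      ∑ k ∈ Finset.range (n + 1), ((-1 : ℤ) ^ (n - k) * (n.choose k : ℤ)) • x ^ k := by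
  have h := (Commute.neg_one_right x).add_pow n
  rw [sub_eq_add_neg, ← neg_one_mul, mul_one, h]
  refine Finset.sum_congr rfl fun k hk => ?_
  rw [zsmul_eq_mul]
  push_cast
  rw [mul_assoc]
  exact (((Commute.neg_one_right (x ^ k)).pow_right (n - k)).mul_right
    ((Nat.cast_commute (n.choose k) (x ^ k)).symm)).eq

variable {V W : Type*} [AddCommGroup V] [Module ℂ V] [AddCommGroup W] [Module ℂ W]

/-- dual family for a linearly independent family -/
lemma exists_dual {N : ℕ} {a : Fin N → V} (ha : LinearIndependent ℂ a) :
    ∃ φ : Fin N → (V →ₗ[ℂ] ℂ), ∀ i j, φ i (a j) = if j = i then 1 else 0 := by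
  classical
  have hinj := ha.injective
  have hsub : LinearIndepOn ℂ id (Set.range a) := (linearIndepOn_id_range_iff hinj).mpr ha
  let b := Module.Basis.extend hsub
  have hmem : ∀ i : Fin N, a i ∈ hsub.extend (Set.subset_univ _) :=
    fun i => hsub.subset_extend _ ⟨i, rfl⟩
  refine ⟨fun i => b.coord ⟨a i, hmem i⟩, fun i j => ?_⟩
  have hbj : b ⟨a j, hmem j⟩ = a j := Module.Basis.extend_apply_self hsub ⟨a j, hmem j⟩
  have : b.coord ⟨a i, hmem i⟩ (b ⟨a j, hmem j⟩) =
      if (⟨a j, hmem j⟩ : hsub.extend _) = ⟨a i, hmem i⟩ then 1 else 0 := by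
    rw [Module.Basis.coord_apply, Module.Basis.repr_self, Finsupp.single_apply]
  rw [hbj] at this
  rw [this]
  congr 1
  simp only [Subtype.mk.injEq, eq_iff_iff]
  exact ⟨fun h => hinj h, fun h => h ▸ rfl⟩

/-- if the left factors are independent, all right factors of a vanishing sum vanish. -/
lemma right_factors_zero {N : ℕ} {a : Fin N → V} (ha : LinearIndependent ℂ a)
    (y : Fin N → W) (h : (∑ i, a i ⊗ₜ[ℂ] y i) = 0) : ∀ i, y i = 0 := by
  classical
  obtain ⟨φ, hφ⟩ := exists_dual ha
  intro i
  have := congrArg (fun z => (TensorProduct.lid ℂ W) ((LinearMap.rTensor W (φ i)) z)) h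
  simp only [map_sum, LinearMap.rTensor_tmul, TensorProduct.lid_tmul, map_zero] at this
  rw [Finset.sum_congr rfl (fun j _ => by rw [hφ i j])] at this
  simpa [Finset.sum_ite_eq] using this

lemma tmul_nonzero {u : V} {w : W} (hu : u ≠ 0) (hw : w ≠ 0) : u ⊗ₜ[ℂ] w ≠ 0 := by
  intro h
  have ha : LinearIndependent ℂ (fun _ : Fin 1 => u) :=
    LinearIndependent.of_subsingleton (0 : Fin 1) hu
  have := right_factors_zero ha (fun _ => w) (by simpa using h) 0
  exact hw this

lemma tmul_right_cancel {u : V} {x : W} (hu : u ≠ 0) (h : u ⊗ₜ[ℂ] x = 0) : x = 0 := by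
  by_contra hx
  exact tmul_nonzero hu hx h

/-! ### Endomorphism lemmas -/

lemma aeval_X_sub_C (F : Module.End ℂ V) (a : ℂ) :
    (Polynomial.aeval F) (X - C a) = F - a • (1 : Module.End ℂ V) := by
  simp [Module.algebraMap_end_eq_smul_id]
  rfl

/-- eigenvector powers -/
lemma pow_apply_eigen {F : Module.End ℂ V} {a : ℂ} {u : V} (h : F u = a • u) (k : ℕ) :
    (F ^ k) u = a ^ k • u := by
  induction k with
  | zero => simp
  | succ k ih =>
    rw [pow_succ', pow_succ', Module.End.mul_apply, ih, map_smul, h, smul_smul, mul_comm]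

/-- kill with a bigger power -/
lemma pow_kill {F : Module.End ℂ V} {u : V} {j : ℕ} (h : (F ^ j) u = 0) {t : ℕ} (hj : j ≤ t) :
    (F ^ t) u = 0 := by
  rw [← Nat.sub_add_cancel hj, pow_add, Module.End.mul_apply, h, map_zero]

/-- Bezout argument: two coprime powers of linear factors annihilating a vector kill it. -/
lemma bezout_kill {G : Module.End ℂ W} {a b : ℂ} (hab : a ≠ b) {w : W} {n m : ℕ}
    (h1 : ((G - a • 1) ^ n) w = 0) (h2 : ((G - b • 1) ^ m) w = 0) : w = 0 := by
  have hc : IsCoprime ((X - C a) ^ n) ((X - C b) ^ m) :=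
    (Polynomial.isCoprime_X_sub_C_of_isUnit_sub ((sub_ne_zero.2 hab).isUnit)).pow
  obtain ⟨h₁, h₂, hh⟩ := hc
  have := congrArg (fun q => (Polynomial.aeval G) q w) hh
  simp only [map_add, map_mul, map_pow, aeval_X_sub_C, map_one, Module.End.one_apply,
    LinearMap.add_apply, Module.End.mul_apply] at this
  rw [h1, h2, map_zero, map_zero, add_zero] at this
  exact this.symm

lemma map_sub_left (F : Module.End ℂ V) (G : Module.End ℂ W)
    (f f' : Module.End ℂ V) (g : Module.End ℂ W) :
    TensorProduct.map (f - f') g = TensorProduct.map f g - TensorProduct.map f' g := by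
  apply TensorProduct.ext'
  intro x y
  simp [TensorProduct.map_tmul, LinearMap.sub_apply, TensorProduct.sub_tmul]

lemma map_sub_right (f : Module.End ℂ V) (g g' : Module.End ℂ W) :
    TensorProduct.map f (g - g') = TensorProduct.map f g - TensorProduct.map f g' := by
  apply TensorProduct.ext'
  intro x y
  simp [TensorProduct.map_tmul, LinearMap.sub_apply, TensorProduct.tmul_sub]

lemma map_commutes (F : Module.End ℂ V) (G : Module.End ℂ W)
    (f : Module.End ℂ V) (hf : Commute f F) :
    Commute (TensorProduct.map f (1 : Module.End ℂ W)) (TensorProduct.map F G - 1) := by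
  have h1 : Commute (TensorProduct.map f (1 : Module.End ℂ W)) (TensorProduct.map F G) := by
    show _ = _
    rw [← TensorProduct.map_mul, ← TensorProduct.map_mul, hf.eq, one_mul, mul_one]
  exact h1.sub_right (Commute.one_right _)

lemma transfer (F : Module.End ℂ V) (G : Module.End ℂ W) {n : ℕ} {u : V} {w : W}
    (f : Module.End ℂ V) (hf : Commute f F)
    (h : ((TensorProduct.map F G - 1) ^ n) (u ⊗ₜ[ℂ] w) = 0) :
    ((TensorProduct.map F G - 1) ^ n) ((f u) ⊗ₜ[ℂ] w) = 0 := by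
  have h2 : (f u) ⊗ₜ[ℂ] w = TensorProduct.map f (1 : Module.End ℂ W) (u ⊗ₜ[ℂ] w) := by
    simp [TensorProduct.map_tmul]
  rw [h2, ← Module.End.mul_apply, ← ((map_commutes F G f hf).pow_right n).eq,
    Module.End.mul_apply, h, map_zero]

/-- The workhorse expansion. -/
lemma expansion (F : Module.End ℂ V) (G : Module.End ℂ W) (a b : ℂ) (K : ℕ) (u : V) (w : W) :
    ((TensorProduct.map F G - (a * b) • 1) ^ K) (u ⊗ₜ[ℂ] w) =
      ∑ t ∈ Finset.range (K + 1),
        ((K.choose t : ℂ) * a ^ (K - t)) •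
          (((F - a • 1) ^ t) u ⊗ₜ[ℂ] ((G ^ t) (((G - b • 1) ^ (K - t)) w))) := by
  classical
  set A := TensorProduct.map (F - a • 1) G with hA
  set B := a • TensorProduct.map (1 : Module.End ℂ V) (G - b • 1) with hB
  have hmap1 : TensorProduct.map (a • (1 : Module.End ℂ V)) G
      = a • TensorProduct.map (1 : Module.End ℂ V) G := TensorProduct.map_smul_left _ _ _
  have hAB : A + B = TensorProduct.map F G - (a * b) • 1 := by
    rw [hA, hB, map_sub_left F G, map_sub_right, hmap1, TensorProduct.map_smul_right,
      TensorProduct.map_one, smul_sub, smul_smul]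
    abel
  have hcomm : Commute A B := by
    show _ = _
    rw [hA, hB, mul_smul_comm, smul_mul_assoc, ← TensorProduct.map_mul, ← TensorProduct.map_mul,
      one_mul, mul_one]
    congr 2
    exact ((Commute.refl G).sub_right ((Commute.one_right G).smul_right b)).eq
  rw [← hAB, hcomm.add_pow, LinearMap.sum_apply]
  refine Finset.sum_congr rfl fun t ht => ?_
  have hBpow : B ^ (K - t) = a ^ (K - t) •
      TensorProduct.map (1 : Module.End ℂ V) ((G - b • 1) ^ (K - t)) := by
    rw [hB, _root_.smul_pow, TensorProduct.map_pow, one_pow]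
  have hApow : A ^ t = TensorProduct.map ((F - a • 1) ^ t) (G ^ t) := by
    rw [hA, TensorProduct.map_pow]
  have h1 : (TensorProduct.map (1 : Module.End ℂ V) ((G - b • 1) ^ (K - t))) (u ⊗ₜ[ℂ] w)
      = u ⊗ₜ[ℂ] (((G - b • 1) ^ (K - t)) w) := by
    simp [TensorProduct.map_tmul]
  rw [Module.End.mul_apply, Module.End.mul_apply, Module.End.natCast_apply, map_nsmul, map_nsmul,
    hBpow, hApow, LinearMap.smul_apply, h1, map_smul, TensorProduct.map_tmul,
    ← Nat.cast_smul_eq_nsmul ℂ, smul_smul]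

/-- `ℂ`-coefficient version of `sub_one_pow`, applied to a vector. -/
lemma sub_one_pow_apply {M : Type*} [AddCommGroup M] [Module ℂ M] (x : Module.End ℂ M) (n : ℕ)
    (v : M) :
    ((x - 1) ^ n) v =
      ∑ k ∈ Finset.range (n + 1), ((-1 : ℂ) ^ (n - k) * (n.choose k : ℂ)) • ((x ^ k) v) := by
  rw [sub_one_pow, LinearMap.sum_apply]
  refine Finset.sum_congr rfl fun k hk => ?_
  rw [LinearMap.smul_apply, ← Int.cast_smul_eq_zsmul ℂ]
  norm_num

lemma neg_one_pow_apply {M : Type*} [AddCommGroup M] [Module ℂ M] (n : ℕ) (v : M) :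
    (((-1 : Module.End ℂ M)) ^ n) v = ((-1 : ℂ) ^ n) • v := by
  have : (-1 : Module.End ℂ M) = (-1 : ℂ) • 1 := by rw [neg_smul, one_smul]
  rw [this, _root_.smul_pow, one_pow, LinearMap.smul_apply, Module.End.one_apply]

lemma scaled_kill {M : Type*} [AddCommGroup M] [Module ℂ M] {G : Module.End ℂ M} {c : ℂ}
    (hc : c ≠ 0) (m : ℕ) (w : M) :
    ((c • G - 1) ^ m) w = 0 ↔ ((G - c⁻¹ • 1) ^ m) w = 0 := by
  have h : c • G - 1 = c • (G - c⁻¹ • 1) := by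
    rw [smul_sub, smul_smul, mul_inv_cancel₀ hc, one_smul]
  rw [h, _root_.smul_pow, LinearMap.smul_apply, smul_eq_zero]
  simp [pow_eq_zero_iff, hc]

/-- if `(c•G-1)^n` kills a nonzero vector then `c ≠ 0`. -/
lemma scale_ne_zero {M : Type*} [AddCommGroup M] [Module ℂ M] {G : Module.End ℂ M} {c : ℂ}
    {n : ℕ} {w : M} (hw : w ≠ 0) (h : ((c • G - 1) ^ n) w = 0) : c ≠ 0 := by
  rintro rfl
  rw [zero_smul, zero_sub, neg_one_pow_apply, smul_eq_zero] at h
  rcases h with h | h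
  · exact pow_ne_zero n (by norm_num : (-1 : ℂ) ≠ 0) h
  · exact hw h

/-- rank-one step: if `u` is an eigenvector, the tensor power collapses. -/
lemma eigen_tensor (F : Module.End ℂ V) (G : Module.End ℂ W) {u : V} {α : ℂ}
    (h : F u = α • u) (n : ℕ) (w : W) :
    ((TensorProduct.map F G - 1) ^ n) (u ⊗ₜ[ℂ] w) = u ⊗ₜ[ℂ] (((α • G - 1) ^ n) w) := by
  rw [sub_one_pow_apply, sub_one_pow_apply, TensorProduct.tmul_sum]
  refine Finset.sum_congr rfl fun k hk => ?_
  rw [TensorProduct.tmul_smul, TensorProduct.map_pow, TensorProduct.map_tmul,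
    pow_apply_eigen h, _root_.smul_pow, LinearMap.smul_apply,
    TensorProduct.smul_tmul, TensorProduct.tmul_smul]

/-- From an eigenvector-type hypothesis extract the `G`-side annihilation. -/
lemma rank_one_extract (F : Module.End ℂ V) (G : Module.End ℂ W) {u : V} {α : ℂ} {w : W}
    (hu : u ≠ 0) (hw : w ≠ 0) (h : F u = α • u) {n : ℕ}
    (hz : ((TensorProduct.map F G - 1) ^ n) (u ⊗ₜ[ℂ] w) = 0) :
    α ≠ 0 ∧ ((G - α⁻¹ • 1) ^ n) w = 0 := by
  rw [eigen_tensor F G h n w] at hz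
  have h0 : ((α • G - 1) ^ n) w = 0 := tmul_right_cancel hu hz
  have hα : α ≠ 0 := scale_ne_zero hw h0
  exact ⟨hα, (scaled_kill hα n w).1 h0⟩

/-- The key induction. -/
lemma keyK (F : Module.End ℂ V) (G : Module.End ℂ W) (n : ℕ) (w : W) (hw : w ≠ 0) :
    ∀ d : ℕ, ∀ p : ℂ[X], p ≠ 0 → p.natDegree ≤ d → ∀ u : V, u ≠ 0 →
      (Polynomial.aeval F p) u = 0 →
      ((TensorProduct.map F G - 1) ^ n) (u ⊗ₜ[ℂ] w) = 0 →
      ∃ α : ℂ, α ≠ 0 ∧ (∃ e : ℕ, ((F - α • 1) ^ e) u = 0) ∧ ((G - α⁻¹ • 1) ^ n) w = 0 := by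
  intro d
  induction d with
  | zero =>
    intro p hp0 hpd u hu hpu _
    exfalso
    have h0 : p.natDegree = 0 := Nat.le_zero.mp hpd
    obtain ⟨c, rfl⟩ := Polynomial.natDegree_eq_zero.mp h0
    have hc : c ≠ 0 := fun h => hp0 (by rw [h, map_zero])
    rw [Polynomial.aeval_C, Algebra.algebraMap_eq_smul_one, LinearMap.smul_apply,
      Module.End.one_apply] at hpu
    exact hu ((smul_eq_zero.mp hpu).resolve_left hc)
  | succ d ih =>
    intro p hp0 hpd u hu hpu hz
    by_cases hdeg : p.natDegree = 0
    · exfalso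
      obtain ⟨c, rfl⟩ := Polynomial.natDegree_eq_zero.mp hdeg
      have hc : c ≠ 0 := fun h => hp0 (by rw [h, map_zero])
      rw [Polynomial.aeval_C, Algebra.algebraMap_eq_smul_one, LinearMap.smul_apply,
        Module.End.one_apply] at hpu
      exact hu ((smul_eq_zero.mp hpu).resolve_left hc)
    · -- get a root
      have hdpos : 0 < p.degree := Polynomial.natDegree_pos_iff_degree_pos.mp
        (Nat.pos_of_ne_zero hdeg)
      obtain ⟨α, hroot⟩ := Complex.exists_root hdpos
      obtain ⟨p', hfac⟩ := (Polynomial.dvd_iff_isRoot.mpr hroot)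
      have hp'0 : p' ≠ 0 := by
        rintro rfl; rw [mul_zero] at hfac; exact hp0 hfac
      have hdeg' : p.natDegree = p'.natDegree + 1 := by
        rw [hfac, Polynomial.natDegree_mul (Polynomial.X_sub_C_ne_zero α) hp'0,
          Polynomial.natDegree_X_sub_C, add_comm]
      set u' := (F - α • 1) u with hu'def
      have hp'u' : (Polynomial.aeval F p') u' = 0 := by
        have : p = p' * (X - C α) := by rw [hfac, mul_comm]
        rw [this, map_mul, Module.End.mul_apply, aeval_X_sub_C] at hpu
        exact hpu
      by_cases hu' : u' = 0
      · -- eigenvector case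
        have heig : F u = α • u := by
          have := hu'def ▸ hu'
          rwa [LinearMap.sub_apply, LinearMap.smul_apply, Module.End.one_apply,
            sub_eq_zero] at this
        obtain ⟨hα, hG⟩ := rank_one_extract F G hu hw heig hz
        exact ⟨α, hα, ⟨1, by rw [pow_one]; exact hu'⟩, hG⟩
      · -- recurse
        have hz' : ((TensorProduct.map F G - 1) ^ n) (u' ⊗ₜ[ℂ] w) = 0 := by
          rw [hu'def]
          exact transfer F G _ ((Commute.refl F).sub_left ((Commute.one_left F).smul_left α)) hz
        have hp'd : p'.natDegree ≤ d := by omega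
        obtain ⟨β, hβ0, ⟨e, he⟩, hGw⟩ := ih p' hp'0 hp'd u' hu' hp'u' hz'
        by_cases hba : β = α
        · subst hba
          refine ⟨β, hβ0, ⟨e + 1, ?_⟩, hGw⟩
          rw [pow_succ, Module.End.mul_apply]
          exact he
        · set u'' := ((F - β • 1) ^ e) u with hu''def
          by_cases hu'' : u'' = 0
          · exact ⟨β, hβ0, ⟨e, hu''⟩, hGw⟩
          · exfalso
            have hcomm : Commute (F - α • 1) ((F - β • 1) ^ e) :=
              (((Commute.refl F).sub_left ((Commute.one_left F).smul_left α)).sub_right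
                ((Commute.one_right (F - α • 1)).smul_right β)).pow_right e
            have heig'' : F u'' = α • u'' := by
              have h1 : (F - α • 1) u'' = 0 := by
                rw [hu''def, ← Module.End.mul_apply, hcomm.eq, Module.End.mul_apply]
                have : (F - α • 1) u = u' := rfl
                rw [this, he]
              rwa [LinearMap.sub_apply, LinearMap.smul_apply, Module.End.one_apply,
                sub_eq_zero] at h1
            have hz'' : ((TensorProduct.map F G - 1) ^ n) (u'' ⊗ₜ[ℂ] w) = 0 := by
              rw [hu''def]
              exact transfer F G _
                ((((Commute.refl F).sub_left ((Commute.one_left F).smul_left β)).pow_left e)) hz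
            obtain ⟨hα, hGw'⟩ := rank_one_extract F G hu'' hw heig'' hz''
            have hne : α⁻¹ ≠ β⁻¹ := fun h => hba (by
              have := congrArg (·⁻¹) h
              simpa [inv_inv] using this.symm)
            exact hw (bezout_kill hne hGw' hGw)

/-- The abstract core theorem. -/
theorem core (F : Module.End ℂ V) (G : Module.End ℂ W) (u : V) (w : W)
    (hu : u ≠ 0) (hw : w ≠ 0) (n : ℕ) (hn : 1 ≤ n) :
    ((TensorProduct.map F G - 1) ^ n) (u ⊗ₜ[ℂ] w) = 0 ↔
      ∃ (l m : ℕ) (lam : ℂ), 0 < l ∧ 0 < m ∧ l + m = n + 1 ∧ lam ≠ 0 ∧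
        ((lam • F - 1) ^ l) u = 0 ∧ ((lam⁻¹ • G - 1) ^ m) w = 0 := by
  classical
  constructor
  · intro hz
    by_cases hind : LinearIndependent ℂ (fun k : Fin (n + 1) => ((F ^ (k : ℕ)) u))
    · exfalso
      have hexp := sub_one_pow_apply (TensorProduct.map F G) n (u ⊗ₜ[ℂ] w)
      rw [hz] at hexp
      have hsum : ∑ k : Fin (n + 1), ((F ^ (k : ℕ)) u) ⊗ₜ[ℂ]
          ((((-1 : ℂ) ^ (n - (k : ℕ)) * ((n.choose (k : ℕ)) : ℂ))) • ((G ^ (k : ℕ)) w)) = 0 := by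
        rw [Fin.sum_univ_eq_sum_range
          (fun k => ((F ^ k) u) ⊗ₜ[ℂ] ((((-1 : ℂ) ^ (n - k) * ((n.choose k) : ℂ))) • ((G ^ k) w)))]
        refine Eq.trans (Finset.sum_congr rfl fun k hk => ?_) hexp.symm
        rw [TensorProduct.tmul_smul, TensorProduct.map_pow, TensorProduct.map_tmul]
      have h0 := right_factors_zero hind _ hsum 0
      simp only [Fin.val_zero, pow_zero, Nat.sub_zero, Nat.choose_zero_right, Nat.cast_one,
        mul_one, Module.End.one_apply] at h0
      rcases smul_eq_zero.mp h0 with h | h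
      · exact pow_ne_zero n (by norm_num : (-1 : ℂ) ≠ 0) h
      · exact hw h
    · obtain ⟨g, hgsum, i₀, hgi⟩ := Fintype.not_linearIndependent_iff.mp hind
      set p : ℂ[X] := ∑ i : Fin (n + 1), Polynomial.C (g i) * Polynomial.X ^ (i : ℕ) with hp
      have hpu : (Polynomial.aeval F) p u = 0 := by
        rw [hp, map_sum, LinearMap.sum_apply]
        rw [← hgsum]
        refine Finset.sum_congr rfl fun i _ => ?_
        rw [map_mul, Polynomial.aeval_C, Polynomial.aeval_X_pow, Module.End.mul_apply]
        simp [Algebra.algebraMap_eq_smul_one]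
      have hp0 : p ≠ 0 := by
        intro h
        apply hgi
        have := congrArg (fun q => Polynomial.coeff q (i₀ : ℕ)) h
        simp only [hp, Polynomial.finset_sum_coeff, Polynomial.coeff_C_mul,
          Polynomial.coeff_X_pow, Polynomial.coeff_zero] at this
        rw [Finset.sum_eq_single i₀] at this
        · simpa using this
        · intro i _ hii
          have : ((i₀ : ℕ) = (i : ℕ)) = False := by
            simp [Fin.val_eq_val, hii.symm]
          simp [this]
        · intro h; exact absurd (Finset.mem_univ i₀) h
      obtain ⟨α, hα, ⟨e, he⟩, hGn⟩ := keyK F G n w hw p.natDegree p hp0 le_rfl u hu hpu hz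
      have hPl : ∃ l : ℕ, ((F - α • 1) ^ l) u = 0 := ⟨e, he⟩
      have hPm : ∃ m : ℕ, ((G - α⁻¹ • 1) ^ m) w = 0 := ⟨n, hGn⟩
      set l := Nat.find hPl with hldef
      set m := Nat.find hPm with hmdef
      have hl : ((F - α • 1) ^ l) u = 0 := Nat.find_spec hPl
      have hm : ((G - α⁻¹ • 1) ^ m) w = 0 := Nat.find_spec hPm
      have hl0 : 0 < l := by
        rcases Nat.eq_zero_or_pos l with h | h
        · exfalso; apply hu; rw [h, pow_zero, Module.End.one_apply] at hl; exact hl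
        · exact h
      have hm0 : 0 < m := by
        rcases Nat.eq_zero_or_pos m with h | h
        · exfalso; apply hw; rw [h, pow_zero, Module.End.one_apply] at hm; exact hm
        · exact h
      have hmn : m ≤ n := Nat.find_min' hPm hGn
      have hbound : l + m ≤ n + 1 := by
        by_contra hcon
        push_neg at hcon
        set K := l + m - 2 with hK
        have hKn : n ≤ K := by omega
        have hzK : ((TensorProduct.map F G - 1) ^ K) (u ⊗ₜ[ℂ] w) = 0 := by
          rw [← Nat.sub_add_cancel hKn, pow_add, Module.End.mul_apply, hz, map_zero]
        have hexp := expansion F G α α⁻¹ K u w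
        rw [mul_inv_cancel₀ hα, one_smul, hzK] at hexp
        set u' := ((F - α • 1) ^ (l - 1)) u with hu'
        set w' := ((G - α⁻¹ • 1) ^ (m - 1)) w with hw'
        have hu'0 : u' ≠ 0 := Nat.find_min hPl (by omega)
        have hw'0 : w' ≠ 0 := Nat.find_min hPm (by omega)
        have heigw' : G w' = α⁻¹ • w' := by
          have h1 : (G - α⁻¹ • 1) w' = 0 := by
            rw [hw', ← Module.End.mul_apply, ← pow_succ']
            rw [show m - 1 + 1 = m by omega]
            exact hm
          rwa [LinearMap.sub_apply, LinearMap.smul_apply, Module.End.one_apply,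
            sub_eq_zero] at h1
        have hterm : ∀ t ∈ Finset.range (K + 1), t ≠ l - 1 →
            ((K.choose t : ℂ) * α ^ (K - t)) •
              (((F - α • 1) ^ t) u ⊗ₜ[ℂ] ((G ^ t) (((G - α⁻¹ • 1) ^ (K - t)) w))) = 0 := by
          intro t _ htne
          rcases le_or_gt l t with h | h
          · rw [pow_kill hl h, TensorProduct.zero_tmul, smul_zero]
          · have hKt : m ≤ K - t := by omega
            rw [pow_kill hm hKt, map_zero, TensorProduct.tmul_zero, smul_zero]
        rw [Finset.sum_eq_single_of_mem (l - 1) (by simp only [Finset.mem_range]; omega)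
          hterm] at hexp
        have hKl : K - (l - 1) = m - 1 := by omega
        rw [hKl] at hexp
        rw [← hw', pow_apply_eigen heigw' (l - 1)] at hexp
        rw [TensorProduct.tmul_smul, smul_smul] at hexp
        have hcoef : (K.choose (l - 1) : ℂ) * α ^ (K - (l - 1)) * (α⁻¹) ^ (l - 1) ≠ 0 := by
          apply mul_ne_zero (mul_ne_zero ?_ (pow_ne_zero _ hα)) (pow_ne_zero _ (inv_ne_zero hα))
          exact Nat.cast_ne_zero.mpr (Nat.choose_pos (by omega : l - 1 ≤ K)).ne'
        rw [hKl] at hcoef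
        exact tmul_nonzero hu'0 hw'0 ((smul_eq_zero.mp hexp.symm).resolve_left hcoef)
      refine ⟨n + 1 - m, m, α⁻¹, by omega, hm0, by omega, inv_ne_zero hα, ?_, ?_⟩
      · exact (scaled_kill (inv_ne_zero hα) _ u).mpr
          (by rw [inv_inv]; exact pow_kill hl (by omega))
      · rw [inv_inv]
        exact (scaled_kill hα m w).mpr hm
  · rintro ⟨l, m, lam, hl, hm, hlm, hlam, h1, h2⟩
    have hFG : TensorProduct.map (lam • F) (lam⁻¹ • G) = TensorProduct.map F G := by
      rw [TensorProduct.map_smul_left, TensorProduct.map_smul_right, smul_smul,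
        mul_inv_cancel₀ hlam, one_smul]
    rw [← hFG]
    have hexp := expansion (lam • F) (lam⁻¹ • G) 1 1 n u w
    simp only [one_smul, one_pow, mul_one, one_mul] at hexp
    rw [hexp]
    apply Finset.sum_eq_zero
    intro t ht
    rcases le_or_gt l t with h | h
    · rw [pow_kill h1 h, TensorProduct.zero_tmul, smul_zero]
    · have : m ≤ n - t := by omega
      rw [pow_kill h2 this, map_zero, TensorProduct.tmul_zero, smul_zero]

/-! ### Bridge from `beta` to the endomorphism picture -/

variable {A : Type*} [Ring A] [Algebra ℂ A]

/-- the two-sided multiplication operator `a ↦ S a T`. -/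
noncomputable def Phi (S T : A) : Module.End ℂ A :=
  (LinearMap.mulLeft ℂ S) ∘ₗ (LinearMap.mulRight ℂ T)

lemma Phi_apply (S T a : A) : Phi S T a = S * (a * T) := rfl

lemma Phi_pow_one (S T : A) (k : ℕ) : ((Phi S T) ^ k) 1 = S ^ k * T ^ k := by
  induction k with
  | zero => simp
  | succ k ih =>
    rw [pow_succ', Module.End.mul_apply, ih, Phi_apply, pow_succ' S, pow_succ T]
    noncomm_ring

lemma beta_eq (n : ℕ) (S T : A) : beta n S T = ((Phi S T - 1) ^ n) 1 := by
  rw [sub_one_pow, LinearMap.sum_apply]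
  unfold beta
  refine Finset.sum_congr rfl fun k hk => ?_
  rw [LinearMap.smul_apply, Phi_pow_one]

lemma Phi_smul (S T : A) (c : ℂ) : Phi S (c • T) = c • Phi S T := by
  apply LinearMap.ext
  intro a
  simp [Phi_apply, mul_smul_comm]

lemma Phi_tensor {B : Type*} [Ring B] [Algebra ℂ B] (S₁ T₁ : A) (S₂ T₂ : B) :
    Phi (S₁ ⊗ₜ[ℂ] S₂) (T₁ ⊗ₜ[ℂ] T₂) = TensorProduct.map (Phi S₁ T₁) (Phi S₂ T₂) := by
  apply TensorProduct.ext'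
  intro a b
  rw [Phi_apply, TensorProduct.map_tmul, Phi_apply, Phi_apply,
    Algebra.TensorProduct.tmul_mul_tmul, Algebra.TensorProduct.tmul_mul_tmul]

end BetaAux

/-- Theorem 1 (tensor splitting of `n`-inverse pairs): for nonzero complex Banach
spaces `X`, `Y`, `S₁⊗S₂` is a left `n`-inverse of `T₁⊗T₂` iff there are `l,m ≥ 1` with
`l+m = n+1` and `λ ≠ 0` with `S₁` a left `l`-inverse of `λT₁` and `S₂` a left
`m`-inverse of `(1/λ)T₂`. -/
theorem beta_tensor_splitting
    {X Y : Type*} [NormedAddCommGroup X] [NormedSpace ℂ X] [CompleteSpace X] [Nontrivial X]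
    [NormedAddCommGroup Y] [NormedSpace ℂ Y] [CompleteSpace Y] [Nontrivial Y]
    (S₁ T₁ : X →L[ℂ] X) (S₂ T₂ : Y →L[ℂ] Y) (n : ℕ) (hn : 1 ≤ n) :
    beta n (S₁ ⊗ₜ[ℂ] S₂) (T₁ ⊗ₜ[ℂ] T₂) = 0 ↔
      ∃ (l m : ℕ) (lam : ℂ), 0 < l ∧ 0 < m ∧ l + m = n + 1 ∧ lam ≠ 0 ∧
        beta l S₁ (lam • T₁) = 0 ∧ beta m S₂ (lam⁻¹ • T₂) = 0 := by
  have h1 : (1 : X →L[ℂ] X) ≠ 0 := by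
    obtain ⟨x, hx⟩ := exists_ne (0 : X)
    intro h
    have hx0 : (1 : X →L[ℂ] X) x = 0 := by rw [h]; rfl
    rw [ContinuousLinearMap.one_apply] at hx0
    exact hx hx0
  have h2 : (1 : Y →L[ℂ] Y) ≠ 0 := by
    obtain ⟨y, hy⟩ := exists_ne (0 : Y)
    intro h
    have hy0 : (1 : Y →L[ℂ] Y) y = 0 := by rw [h]; rfl
    rw [ContinuousLinearMap.one_apply] at hy0
    exact hy hy0
  have key := BetaAux.core (BetaAux.Phi S₁ T₁) (BetaAux.Phi S₂ T₂) 1 1 h1 h2 n hn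
  have hbeta : beta n (S₁ ⊗ₜ[ℂ] S₂) (T₁ ⊗ₜ[ℂ] T₂)
      = ((TensorProduct.map (BetaAux.Phi S₁ T₁) (BetaAux.Phi S₂ T₂) - 1) ^ n)
          ((1 : X →L[ℂ] X) ⊗ₜ[ℂ] (1 : Y →L[ℂ] Y)) := by
    rw [BetaAux.beta_eq, BetaAux.Phi_tensor, Algebra.TensorProduct.one_def]
  rw [hbeta, key]
  refine exists_congr fun l => exists_congr fun m => exists_congr fun lam => ?_
  rw [BetaAux.beta_eq, BetaAux.Phi_smul, BetaAux.beta_eq, BetaAux.Phi_smul]
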